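/- Let X be a nonsingular simple G-projective variety with boundary divisors D₁,…,D_r and dual B-stable curves C₁,…,C_r, and let L = Σᵢ aᵢ Dᵢ be an ample line bundle on X (so all aᵢ > 0). Then the Seshadri constant of L at the sink x⁻ equals minᵢ aᵢ. -/
import Mathlib


/-- Let `X` be a nonsingular simple `G`-projective variety with boundary
divisors `D₁, …, D_r` and dual `B`-stable curves `Cᵢ` with `Dᵢ·Cⱼ = δᵢⱼ`, and let
`L = ∑ᵢ aᵢ Dᵢ` be ample (all `aᵢ > 0`).  Then the Seshadri constant of `L` at the sink `x⁻`
equals `minᵢ aᵢ`.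

Numerical model: divisor classes on `Bl_{x⁻}(X)` are pairs `(b, c) = ∑ bᵢ Bl^*Dᵢ − c E`;
`Nef` is the nef cone, satisfying: the pullbacks `Bl^*Dᵢ` and `∑ Bl^*Dᵢ − E` are nef, `Nef`
is a convex cone, and nef classes meet the effective curves `e` and `C̃ᵢ` nonnegatively
(i.e. `c ≥ 0` and `bᵢ − c ≥ 0`).  The Seshadri constant is
`ε(L; x⁻) = sup { t | Bl^*L − t E is nef }`. -/
theorem stmt8 (r : ℕ) [NeZero r]
    (Nef : Set ((Fin r → ℝ) × ℝ))
    (a : Fin r → ℝ) (ha : ∀ i, 0 < a i)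
    (h_pull : ∀ i, ((Pi.single i 1 : Fin r → ℝ), (0:ℝ)) ∈ Nef)
    (h_sum : ((fun _ => (1:ℝ)), (1:ℝ)) ∈ Nef)
    (h_cone_add : ∀ D ∈ Nef, ∀ D' ∈ Nef, D + D' ∈ Nef)
    (h_cone_smul : ∀ t : ℝ, 0 ≤ t → ∀ D ∈ Nef, t • D ∈ Nef)
    -- nef classes meet the effective curve classes `e` and `C̃ᵢ` nonnegatively
    (h_curves : ∀ D ∈ Nef, 0 ≤ D.2 ∧ ∀ i, D.2 ≤ D.1 i) :
    sSup { t : ℝ | (a, t) ∈ Nef } = ⨅ i, a i := by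
  classical
  have hr : Nonempty (Fin r) := Fin.pos_iff_nonempty.mp (NeZero.pos r)
  have hbdd : BddBelow (Set.range a) := Set.Finite.bddBelow (Set.finite_range a)
  set m := ⨅ i, a i with hm
  have hmle : ∀ i, m ≤ a i := fun i => ciInf_le hbdd i
  have hm0 : 0 ≤ m := le_ciInf fun i => (ha i).le
  have hsum_mem : (∑ i : Fin r, (a i - m) • ((Pi.single i 1 : Fin r → ℝ), (0:ℝ))) ∈ Nef := by
    have h0 : (0 : (Fin r → ℝ) × ℝ) ∈ Nef := by
      simpa using h_cone_smul 0 le_rfl _ h_sum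
    refine Finset.sum_induction _ (· ∈ Nef) (fun x y hx hy => h_cone_add x hx y hy) h0 ?_
    intro i _
    exact h_cone_smul _ (sub_nonneg.mpr (hmle i)) _ (h_pull i)
  have hmem : (a, m) ∈ Nef := by
    have h := h_cone_add _ (h_cone_smul m hm0 _ h_sum) _ hsum_mem
    convert h using 1
    refine Prod.ext ?_ ?_
    · funext j
      simp [Prod.fst_sum, Finset.sum_apply, Pi.single_apply]
    · simp [Prod.snd_sum]
  refine le_antisymm ?_ (le_csSup ?_ hmem)
  · refine csSup_le ⟨m, hmem⟩ ?_
    intro t ht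
    exact le_ciInf fun i => (h_curves _ ht).2 i
  · exact ⟨a (Classical.arbitrary _), fun t ht => (h_curves _ ht).2 _⟩
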